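/- Let G be a finite group acting faithfully and ℂ-linearly on a complex vector space V. Consider the space W of functions from G to V, with the group Perm(G) of permutations of the underlying set of G acting by (σ · f)(g) = f(σ⁻¹(g)). Let Δ ⊆ W be the image of the ℂ-linear map V → W sending v to the function g ↦ g · v. Then a permutation σ ∈ Perm(G) satisfies σ · Δ = Δ if and only if there exists h ∈ G such that σ is the right-translation map g ↦ g h. In particular, the normalizer of Δ in Perm(G) is a subgroup isomorphic to G. -/

import Mathlib

/-- for a faithful `ℂ`-linear action `ρ` of a finite group `G` on `V`, let
`Δ ⊆ Maps(G,V)` be the image of the coaction map `v ↦ (g ↦ ρ g v)`, with the permutation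
group of the set `G` acting on `Maps(G,V)` by `(σ · f)(g) = f(σ⁻¹ g)`. Then `σ · Δ = Δ` iff
`σ` is right translation by some `h ∈ G`; in particular the normalizer of `Δ` in `Perm(G)`
is a subgroup isomorphic to `G`. -/
theorem stmt10 (G : Type*) [Group G] [Finite G]
    (V : Type*) [AddCommGroup V] [Module ℂ V]
    (ρ : Representation ℂ G V)
    (hfaith : ∀ g : G, (∀ v : V, ρ g v = v) → g = 1) :
    (∀ σ : Equiv.Perm G,
      Submodule.map (LinearMap.funLeft ℂ V ⇑σ⁻¹)
          (LinearMap.range (LinearMap.pi fun g : G => ρ g)) =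
        LinearMap.range (LinearMap.pi fun g : G => ρ g) ↔
      ∃ h : G, σ = Equiv.mulRight h) ∧
    ∃ H : Subgroup (Equiv.Perm G),
      (∀ σ : Equiv.Perm G, σ ∈ H ↔
        Submodule.map (LinearMap.funLeft ℂ V ⇑σ⁻¹)
            (LinearMap.range (LinearMap.pi fun g : G => ρ g)) =
          LinearMap.range (LinearMap.pi fun g : G => ρ g)) ∧
      Nonempty (H ≃* G) := by
  have key : ∀ σ : Equiv.Perm G,
      Submodule.map (LinearMap.funLeft ℂ V ⇑σ⁻¹)
          (LinearMap.range (LinearMap.pi fun g : G => ρ g)) =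
        LinearMap.range (LinearMap.pi fun g : G => ρ g) ↔
      ∃ h : G, σ = Equiv.mulRight h := by
    intro σ
    constructor
    · intro hσ
      refine ⟨(σ⁻¹ 1)⁻¹, ?_⟩
      have hmem : ∀ v : V,
          (LinearMap.funLeft ℂ V ⇑σ⁻¹) ((LinearMap.pi fun g : G => ρ g) v) ∈
            LinearMap.range (LinearMap.pi fun g : G => ρ g) := by
        intro v
        rw [← hσ]
        exact Submodule.mem_map_of_mem (LinearMap.mem_range_self _ v)
      have key2 : ∀ (g : G) (v : V), ρ (σ⁻¹ g) v = ρ (g * σ⁻¹ 1) v := by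
        intro g v
        obtain ⟨w, hw⟩ := hmem v
        have hg := congrFun hw g
        have h1 := congrFun hw 1
        simp only [LinearMap.pi_apply, LinearMap.funLeft_apply, Function.comp_apply,
          map_one, Module.End.one_apply] at hg h1
        rw [← hg, h1, ← Module.End.mul_apply, ← map_mul]
      have heq : ∀ g : G, σ⁻¹ g = g * σ⁻¹ 1 := by
        intro g
        have h0 : (σ⁻¹ g)⁻¹ * (g * σ⁻¹ 1) = 1 := by
          apply hfaith
          intro v
          rw [map_mul, Module.End.mul_apply, ← key2 g v, ← Module.End.mul_apply,
            ← map_mul, inv_mul_cancel, map_one, Module.End.one_apply]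
        exact (inv_mul_eq_one.mp h0).symm ▸ rfl
      ext g
      have := heq (σ g)
      simp only [Equiv.Perm.inv_def, Equiv.symm_apply_apply] at this
      simp only [Equiv.coe_mulRight]
      exact eq_mul_inv_of_mul_eq this.symm
    · rintro ⟨h, rfl⟩
      have hinv : ∀ g : G, ((Equiv.mulRight h)⁻¹ : Equiv.Perm G) g = g * h⁻¹ := by
        intro g
        rfl
      apply le_antisymm
      · rintro x hx
        obtain ⟨y, ⟨v, rfl⟩, rfl⟩ := hx
        refine ⟨ρ h⁻¹ v, ?_⟩
        funext g
        simp only [LinearMap.pi_apply, LinearMap.funLeft_apply, Function.comp_apply, hinv,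
          ← Module.End.mul_apply, ← map_mul]
      · rintro x ⟨v, rfl⟩
        refine ⟨(LinearMap.pi fun g : G => ρ g) (ρ h v), ⟨ρ h v, rfl⟩, ?_⟩
        funext g
        simp only [LinearMap.pi_apply, LinearMap.funLeft_apply, Function.comp_apply, hinv,
          ← Module.End.mul_apply, ← map_mul, inv_mul_cancel_right]
  refine ⟨key, ?_⟩
  have fmul : ∀ a b : G, Equiv.mulRight ((a * b)⁻¹ : G) =
      Equiv.mulRight a⁻¹ * Equiv.mulRight b⁻¹ := by
    intro a b
    ext x
    simp [mul_assoc]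
  let f : G →* Equiv.Perm G :=
    { toFun := fun h => Equiv.mulRight h⁻¹
      map_one' := by ext x; simp
      map_mul' := fmul }
  have hinj : Function.Injective f := by
    intro a b hab
    have := congrArg (fun e : Equiv.Perm G => e 1) hab
    simp only [f, MonoidHom.coe_mk, OneHom.coe_mk, Equiv.coe_mulRight, one_mul] at this
    exact inv_injective this
  refine ⟨f.range, ?_, ⟨(MonoidHom.ofInjective hinj).symm⟩⟩
  intro σ
  rw [key σ]
  constructor
  · rintro ⟨h, rfl⟩
    exact ⟨h⁻¹, rfl⟩
  · rintro ⟨h, rfl⟩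
    exact ⟨h⁻¹, by simp [f]⟩
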